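/- arXiv:2406.07223 — 2 statements merged into one kernel-verified Lean document; each statement's English description precedes it below -/
import Mathlib

section
/- Let p be a prime and m ≥ 1. The polynomial x² + 3 has a root in the finite field F_{p^m} if and only if m is even, or p ≡ 1 (mod 6), or p ∈ {2, 3}. -/
lemma two_pow_mod_three : ∀ m : ℕ, 2 ^ m % 3 = if m % 2 = 0 then 1 else 2 := by
  intro m
  induction m with
  | zero => simp
  | succ n ih =>
    rw [pow_succ, Nat.mul_mod, ih]
    rcases Nat.even_or_odd n with h | h
    · rw [Nat.even_iff] at h; simp [h, Nat.succ_mod_two_eq_one_iff.mpr h]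
    · rw [Nat.odd_iff] at h; simp [h, Nat.succ_mod_two_eq_zero_iff.mpr h]

lemma neg_three_isSquare_iff (F : Type*) [Field F] [Fintype F]
    (h2 : ringChar F ≠ 2) (h3 : ringChar F ≠ 3) :
    IsSquare (-3 : F) ↔ Fintype.card F % 3 = 1 := by
  classical
  have h2' : (2 : F) ≠ 0 := Ring.two_ne_zero h2
  have h3' : (3 : F) ≠ 0 := by
    intro h
    have hd : ringChar F ∣ 3 := (CharP.cast_eq_zero_iff F (ringChar F) 3).mp (by exact_mod_cast h)
    rcases (Nat.prime_three).eq_one_or_self_of_dvd _ hd with h1 | h1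
    · exact CharP.ringChar_ne_one h1
    · exact h3 h1
  constructor
  · rintro ⟨s, hs⟩
    set ω : F := (s - 1) / 2 with hω
    have hω0 : ω ^ 2 + ω + 1 = 0 := by
      rw [hω]
      field_simp
      linear_combination -1 * hs
    have hωne : ω ≠ 0 := by
      intro h
      rw [h] at hω0
      simp at hω0
    have hcube : ω ^ 3 = 1 := by linear_combination (ω - 1) * hω0
    set u : Fˣ := Units.mk0 ω hωne with hu
    have hu3 : u ^ 3 = 1 := by
      ext
      simpa [hu] using hcube
    have hune : u ≠ 1 := by
      intro h
      have hω1 : ω = 1 := by rw [hu] at h; simpa using congrArg Units.val h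
      rw [hω1] at hω0
      exact h3' (by linear_combination hω0)
    have hord : orderOf u = 3 := by
      have hdvd : orderOf u ∣ 3 := orderOf_dvd_of_pow_eq_one hu3
      rcases (Nat.prime_three).eq_one_or_self_of_dvd _ hdvd with h1 | h1
      · exact absurd (orderOf_eq_one_iff.mp h1) hune
      · exact h1
    have hdvd : 3 ∣ Fintype.card Fˣ := hord ▸ orderOf_dvd_card
    rw [Fintype.card_units] at hdvd
    obtain ⟨k, hk⟩ := hdvd
    have hcard := Fintype.one_lt_card (α := F)
    omega
  · intro h
    have hcard := Fintype.one_lt_card (α := F)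
    have hdvd : 3 ∣ Fintype.card Fˣ := by
      rw [Fintype.card_units]; omega
    obtain ⟨g, hg⟩ := IsCyclic.exists_generator (α := Fˣ)
    have hog : orderOf g = Fintype.card Fˣ := by
      rw [← Nat.card_eq_fintype_card]; exact orderOf_eq_card_of_forall_mem_zpowers hg
    obtain ⟨k, hk⟩ := hdvd
    have hk1 : 1 ≤ k := by
      rw [Fintype.card_units] at hk; omega
    set ζ : Fˣ := g ^ k with hζ
    have hζ3 : ζ ^ 3 = 1 := by
      rw [hζ, ← pow_mul, mul_comm, ← hk, ← hog]
      exact pow_orderOf_eq_one g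
    have hζne : ζ ≠ 1 := by
      intro hζ1
      have hd : orderOf g ∣ k := orderOf_dvd_of_pow_eq_one (by rw [← hζ]; exact hζ1)
      have := Nat.le_of_dvd (by omega) hd
      omega
    set ω : F := (ζ : F) with hω
    have hcube : ω ^ 3 = 1 := by
      rw [hω, ← Units.val_pow_eq_pow_val, hζ3, Units.val_one]
    have hωne1 : ω ≠ 1 := fun hh => hζne (Units.ext hh)
    have hω0 : ω ^ 2 + ω + 1 = 0 := by
      have hz : (ω - 1) * (ω ^ 2 + ω + 1) = 0 := by linear_combination hcube
      rcases mul_eq_zero.mp hz with h' | h'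
      · exact absurd (by linear_combination h') hωne1
      · exact h'
    exact ⟨2 * ω + 1, by linear_combination (-4) * hω0⟩

/-- Let `p` be a prime and `m ≥ 1`. The polynomial `x² + 3` has a root in the
finite field `F_{p^m}` if and only if `m` is even, or `p ≡ 1 (mod 6)`, or `p ∈ {2, 3}`. -/
theorem root_of_x_sq_add_three_iff (p m : ℕ) [Fact p.Prime] (hm : 1 ≤ m) :
    (∃ x : GaloisField p m, x ^ 2 + 3 = 0) ↔
      (Even m ∨ p % 6 = 1 ∨ p = 2 ∨ p = 3) := by
  have hp := (Fact.out : p.Prime)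
  have hchar : ringChar (GaloisField p m) = p := ringChar.eq _ p
  rcases eq_or_ne p 2 with h2 | h2
  · subst h2
    refine iff_of_true ⟨1, ?_⟩ (by norm_num)
    have h : ((2 : ℕ) : GaloisField 2 m) = 0 := CharP.cast_eq_zero (GaloisField 2 m) 2
    push_cast at h
    linear_combination 2 * h
  rcases eq_or_ne p 3 with h3 | h3
  · subst h3
    refine iff_of_true ⟨0, ?_⟩ (by norm_num)
    have h : ((3 : ℕ) : GaloisField 3 m) = 0 := CharP.cast_eq_zero (GaloisField 3 m) 3
    push_cast at h
    linear_combination h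
  · have hm0 : m ≠ 0 := by omega
    have hcardN : Nat.card (GaloisField p m) = p ^ m := GaloisField.card p m hm0
    have : Fintype (GaloisField p m) := Fintype.ofFinite _
    have hcard : Fintype.card (GaloisField p m) = p ^ m := by
      rw [← Nat.card_eq_fintype_card]; exact hcardN
    have hiff : (∃ x : GaloisField p m, x ^ 2 + 3 = 0) ↔ IsSquare (-3 : GaloisField p m) := by
      constructor
      · rintro ⟨x, hx⟩; exact ⟨x, by linear_combination -hx⟩
      · rintro ⟨r, hr⟩; exact ⟨r, by linear_combination -hr⟩
    rw [hiff, neg_three_isSquare_iff _ (by rw [hchar]; exact h2) (by rw [hchar]; exact h3), hcard]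
    have hp2 : p % 2 = 1 := Nat.odd_iff.mp (hp.odd_of_ne_two h2)
    have hp3 : p % 3 ≠ 0 := by
      intro h
      exact h3 ((Nat.prime_dvd_prime_iff_eq Nat.prime_three hp).mp
        (Nat.dvd_of_mod_eq_zero h)).symm
    rw [Nat.pow_mod]
    rcases (show p % 3 = 1 ∨ p % 3 = 2 by omega) with h | h
    · rw [h, one_pow]
      constructor
      · intro _; right; left; omega
      · intro _; rfl
    · rw [h, two_pow_mod_three, Nat.even_iff]
      constructor
      · intro hh
        by_cases he : m % 2 = 0
        · exact Or.inl he
        · simp [he] at hh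
      · rintro (he | he | he | he)
        · simp [he]
        · omega
        · omega
        · omega
end

section
/- For n = 1, the scheme Y⁰ = {Ā = B̄ = 0} ⊂ P², where Ā = u₀³ + u₁³ + 3u₁²u₂ + 3u₁u₂² + 9u₂³ and B̄ = u₀³ + u₁³ - u₁²u₂ + 3u₁u₂² - 3u₂³, has exactly three irreducible components: Y⁰₁ = {u₀ = u₁² + 3u₂² = 0}, Y⁰₂ = {u₂ = u₀² - u₀u₁ + u₁² = 0}, and Y⁰₃ = {u₂ = u₀ + u₁ = 0}. -/
open MvPolynomial

/-- `Ā = u₀³ + u₁³ + 3u₁²u₂ + 3u₁u₂² + 9u₂³`. -/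
noncomputable def A₀ (k : Type) [Field k] : MvPolynomial (Fin 3) k :=
  X 0 ^ 3 + X 1 ^ 3 + 3 * X 1 ^ 2 * X 2 + 3 * X 1 * X 2 ^ 2 + 9 * X 2 ^ 3

/-- `B̄ = u₀³ + u₁³ - u₁²u₂ + 3u₁u₂² - 3u₂³`. -/
noncomputable def B₀ (k : Type) [Field k] : MvPolynomial (Fin 3) k :=
  X 0 ^ 3 + X 1 ^ 3 - X 1 ^ 2 * X 2 + 3 * X 1 * X 2 ^ 2 - 3 * X 2 ^ 3

namespace Y0aux

variable {k : Type} [Field k]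

/-- Linear independence of `1, z` over (the image of) `k` inside `K[X]`,
for `z ∈ K` not in the image of `k`. -/
lemma indep {K : Type} [Field K] [Algebra k K] {z : K}
    (hz : ∀ c : k, algebraMap k K c ≠ z) {a b : Polynomial k}
    (h : a.map (algebraMap k K) * Polynomial.C z + b.map (algebraMap k K) = 0) :
    a = 0 ∧ b = 0 := by
  have hinj : Function.Injective (algebraMap k K) := (algebraMap k K).injective
  have ha : a = 0 := by
    by_contra hne
    obtain ⟨n, hn⟩ : ∃ n, a.coeff n ≠ 0 := by
      by_contra h'
      push_neg at h'
      exact hne (Polynomial.ext h')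
    have hc := congrArg (fun p => Polynomial.coeff p n) h
    simp only [Polynomial.coeff_add, Polynomial.coeff_mul_C, Polynomial.coeff_map,
      Polynomial.coeff_zero] at hc
    apply hz (-(b.coeff n) / (a.coeff n))
    have han : algebraMap k K (a.coeff n) ≠ 0 := fun h0 => hn (by
      have : algebraMap k K (a.coeff n) = algebraMap k K 0 := by simpa using h0
      exact hinj this)
    rw [map_div₀, map_neg, div_eq_iff han]
    linear_combination -hc
  refine ⟨ha, ?_⟩
  rw [ha] at h
  simp only [Polynomial.map_zero, zero_mul, zero_add] at h
  have : b.map (algebraMap k K) = (0 : Polynomial k).map (algebraMap k K) := by simpa using h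
  exact Polynomial.map_injective _ hinj this

/-- Reduction to a normal form `a(X j) * X i + b(X j)` modulo an ideal containing
`X l` and a relation that rewrites `(X i)²`. -/
lemma reduce (i j l : Fin 3) (r s : Polynomial k)
    (I : Ideal (MvPolynomial (Fin 3) k))
    (hcov : ∀ n : Fin 3, n = i ∨ n = j ∨ n = l)
    (hl : X l ∈ I)
    (hi : (X i : MvPolynomial (Fin 3) k) ^ 2
        - (Polynomial.aeval (X j) r + Polynomial.aeval (X j) s * X i) ∈ I)
    (P : MvPolynomial (Fin 3) k) :
    ∃ a b : Polynomial k,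
      P - (Polynomial.aeval (X j) a * X i + Polynomial.aeval (X j) b) ∈ I := by
  induction P using MvPolynomial.induction_on with
  | C c =>
      refine ⟨0, Polynomial.C c, ?_⟩
      have : (C c : MvPolynomial (Fin 3) k)
          - (Polynomial.aeval (X j) (0 : Polynomial k) * X i
            + Polynomial.aeval (X j) (Polynomial.C c)) = 0 := by
        simp [MvPolynomial.algebraMap_eq]
      rw [this]; exact I.zero_mem
  | add p q hp hq =>
      obtain ⟨a, b, hab⟩ := hp
      obtain ⟨c, d, hcd⟩ := hq
      refine ⟨a + c, b + d, ?_⟩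
      have key : p + q - (Polynomial.aeval (X j) (a + c) * X i + Polynomial.aeval (X j) (b + d))
          = (p - (Polynomial.aeval (X j) a * X i + Polynomial.aeval (X j) b))
            + (q - (Polynomial.aeval (X j) c * X i + Polynomial.aeval (X j) d)) := by
        simp only [map_add]; ring
      rw [key]; exact I.add_mem hab hcd
  | mul_X p n hp =>
      obtain ⟨a, b, hab⟩ := hp
      rcases hcov n with rfl | rfl | rfl
      · refine ⟨a * s + b, a * r, ?_⟩
        have key : p * X n - (Polynomial.aeval (X j) (a * s + b) * X n
              + Polynomial.aeval (X j) (a * r))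
            = (p - (Polynomial.aeval (X j) a * X n + Polynomial.aeval (X j) b)) * X n
              + Polynomial.aeval (X j) a
                * ((X n : MvPolynomial (Fin 3) k) ^ 2
                  - (Polynomial.aeval (X j) r + Polynomial.aeval (X j) s * X n)) := by
          simp only [map_add, map_mul]; ring
        rw [key]
        exact I.add_mem (I.mul_mem_right _ hab) (I.mul_mem_left _ hi)
      · refine ⟨a * Polynomial.X, b * Polynomial.X, ?_⟩
        have key : p * X n - (Polynomial.aeval (X n) (a * Polynomial.X) * X i
              + Polynomial.aeval (X n) (b * Polynomial.X))
            = (p - (Polynomial.aeval (X n) a * X i + Polynomial.aeval (X n) b)) * X n := by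
          simp only [map_mul, Polynomial.aeval_X]; ring
        rw [key]
        exact I.mul_mem_right _ hab
      · refine ⟨0, 0, ?_⟩
        have key : p * X n - (Polynomial.aeval (X j) (0 : Polynomial k) * X i
              + Polynomial.aeval (X j) (0 : Polynomial k))
            = (p - (Polynomial.aeval (X j) a * X i + Polynomial.aeval (X j) b)) * X n
              + (Polynomial.aeval (X j) a * X i + Polynomial.aeval (X j) b) * X n := by
          simp only [map_zero]; ring
        rw [key]
        exact I.add_mem (I.mul_mem_right _ hab) (I.mul_mem_left _ hl)

/-- Composing an algebra map `MvPolynomial (Fin 3) k →ₐ[k] K[X]` sending `X j ↦ X`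
with `Polynomial.aeval (X j)` is `Polynomial.map`. -/
lemma aeval_comp {K : Type} [Field K] [Algebra k K]
    (φ : MvPolynomial (Fin 3) k →ₐ[k] Polynomial K) (j : Fin 3)
    (hj : φ (X j) = Polynomial.X) (a : Polynomial k) :
    φ (Polynomial.aeval (X j) a) = a.map (algebraMap k K) := by
  rw [← Polynomial.aeval_algHom_apply, hj]
  have : (Polynomial.aeval (Polynomial.X : Polynomial K) : Polynomial k →ₐ[k] Polynomial K)
      = Polynomial.mapAlgHom (Algebra.ofId k K) := Polynomial.algHom_ext (by simp)
  rw [this, Polynomial.mapAlgHom]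
  simp [Algebra.ofId]

end Y0aux

/-- For `n = 1`, the scheme `Y⁰ = {Ā = B̄ = 0} ⊂ P²` has exactly three
irreducible components `Y⁰₁ = {u₀ = u₁² + 3u₂² = 0}`, `Y⁰₂ = {u₂ = u₀² - u₀u₁ + u₁² = 0}`
and `Y⁰₃ = {u₂ = u₀ + u₁ = 0}`; i.e. the minimal primes over the ideal `(Ā, B̄)` are
exactly the ideals `(u₀, u₁² + 3u₂²)`, `(u₂, u₀² - u₀u₁ + u₁²)` and `(u₂, u₀ + u₁)`.
Here the base field `k` has characteristic zero and `-3` is not a square in `k` (so that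
each of the first two components is irreducible over `k`, geometrically a pair of
conjugate points). -/
theorem components_of_Y0 (k : Type) [Field k] [CharZero k] (hk : ∀ x : k, x ^ 2 ≠ -3) :
    (Ideal.span {A₀ k, B₀ k}).minimalPrimes =
      {Ideal.span {X 0, X 1 ^ 2 + 3 * X 2 ^ 2},
       Ideal.span {X 2, X 0 ^ 2 - X 0 * X 1 + X 1 ^ 2},
       Ideal.span {X 2, X 0 + X 1}} := by
  classical
  set p1 : Ideal (MvPolynomial (Fin 3) k) := Ideal.span {X 0, X 1 ^ 2 + 3 * X 2 ^ 2} with hp1def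
  set p2 : Ideal (MvPolynomial (Fin 3) k) :=
    Ideal.span {X 2, X 0 ^ 2 - X 0 * X 1 + X 1 ^ 2} with hp2def
  set p3 : Ideal (MvPolynomial (Fin 3) k) := Ideal.span {X 2, X 0 + X 1} with hp3def
  set I : Ideal (MvPolynomial (Fin 3) k) := Ideal.span {A₀ k, B₀ k} with hIdef
  -- generators
  have hg1a : (X 0 : MvPolynomial (Fin 3) k) ∈ p1 := Ideal.subset_span (Set.mem_insert _ _)
  have hg1b : (X 1 ^ 2 + 3 * X 2 ^ 2 : MvPolynomial (Fin 3) k) ∈ p1 :=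
    Ideal.subset_span (Set.mem_insert_of_mem _ rfl)
  have hg2a : (X 2 : MvPolynomial (Fin 3) k) ∈ p2 := Ideal.subset_span (Set.mem_insert _ _)
  have hg2b : (X 0 ^ 2 - X 0 * X 1 + X 1 ^ 2 : MvPolynomial (Fin 3) k) ∈ p2 :=
    Ideal.subset_span (Set.mem_insert_of_mem _ rfl)
  have hg3a : (X 2 : MvPolynomial (Fin 3) k) ∈ p3 := Ideal.subset_span (Set.mem_insert _ _)
  have hg3b : (X 0 + X 1 : MvPolynomial (Fin 3) k) ∈ p3 :=
    Ideal.subset_span (Set.mem_insert_of_mem _ rfl)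
  clear_value p1 p2 p3 I
  -- I ≤ pᵢ
  have hIle1 : I ≤ p1 := by
    rw [hIdef, hp1def, Ideal.span_le, Set.insert_subset_iff, Set.singleton_subset_iff]
    constructor
    · exact Ideal.mem_span_pair.mpr ⟨(X 0 ^ 2 : MvPolynomial (Fin 3) k), X 1 + 3 * X 2, by simp only [A₀]; ring⟩
    · exact Ideal.mem_span_pair.mpr ⟨(X 0 ^ 2 : MvPolynomial (Fin 3) k), X 1 - X 2, by simp only [B₀]; ring⟩
  have hIle2 : I ≤ p2 := by
    rw [hIdef, hp2def, Ideal.span_le, Set.insert_subset_iff, Set.singleton_subset_iff]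
    constructor
    · exact Ideal.mem_span_pair.mpr
        ⟨(3 * X 1 ^ 2 + 3 * X 1 * X 2 + 9 * X 2 ^ 2 : MvPolynomial (Fin 3) k), X 0 + X 1, by simp only [A₀]; ring⟩
    · exact Ideal.mem_span_pair.mpr
        ⟨(-X 1 ^ 2 + 3 * X 1 * X 2 - 3 * X 2 ^ 2 : MvPolynomial (Fin 3) k), X 0 + X 1, by simp only [B₀]; ring⟩
  have hIle3 : I ≤ p3 := by
    rw [hIdef, hp3def, Ideal.span_le, Set.insert_subset_iff, Set.singleton_subset_iff]
    constructor
    · exact Ideal.mem_span_pair.mpr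
        ⟨(3 * X 1 ^ 2 + 3 * X 1 * X 2 + 9 * X 2 ^ 2 : MvPolynomial (Fin 3) k), X 0 ^ 2 - X 0 * X 1 + X 1 ^ 2,
          by simp only [A₀]; ring⟩
    · exact Ideal.mem_span_pair.mpr
        ⟨(-X 1 ^ 2 + 3 * X 1 * X 2 - 3 * X 2 ^ 2 : MvPolynomial (Fin 3) k), X 0 ^ 2 - X 0 * X 1 + X 1 ^ 2,
          by simp only [B₀]; ring⟩
  -- the algebraically closed field and the two roots
  
  obtain ⟨α, hα⟩ : ∃ α : AlgebraicClosure k, α ^ 2 = -3 := IsAlgClosed.exists_pow_nat_eq _ (by norm_num)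
  have hinj : Function.Injective (algebraMap k (AlgebraicClosure k)) := (algebraMap k (AlgebraicClosure k)).injective
  have hαk : ∀ c : k, algebraMap k (AlgebraicClosure k) c ≠ α := by
    intro c hc
    apply hk c
    apply hinj
    rw [map_pow, hc, hα, map_neg, map_ofNat]
  obtain ⟨ω, hω⟩ : ∃ ω : AlgebraicClosure k, ω ^ 2 - ω + 1 = 0 := by
    refine ⟨(1 + α) / 2, ?_⟩
    have h2 : (2 : AlgebraicClosure k) ≠ 0 := two_ne_zero
    field_simp
    linear_combination hα
  have hωk : ∀ c : k, algebraMap k (AlgebraicClosure k) c ≠ ω := by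
    intro c hc
    apply hk (2 * c - 1)
    apply hinj
    rw [map_pow, map_neg, map_ofNat, map_sub, map_mul, map_ofNat, map_one, hc]
    linear_combination 4 * hω
  -- the three algebra maps
  set φ1 : MvPolynomial (Fin 3) k →ₐ[k] Polynomial (AlgebraicClosure k) :=
    aeval ![0, Polynomial.C α * Polynomial.X, Polynomial.X] with hφ1def
  set φ2 : MvPolynomial (Fin 3) k →ₐ[k] Polynomial (AlgebraicClosure k) :=
    aeval ![Polynomial.C ω * Polynomial.X, Polynomial.X, 0] with hφ2def
  set φ3 : MvPolynomial (Fin 3) k →ₐ[k] Polynomial k :=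
    aeval ![Polynomial.X, -Polynomial.X, 0] with hφ3def
  clear_value φ1 φ2 φ3
  have hφ1X0 : φ1 (X 0) = 0 := by simp [hφ1def]
  have hφ1X1 : φ1 (X 1) = Polynomial.C α * Polynomial.X := by simp [hφ1def]
  have hφ1X2 : φ1 (X 2) = Polynomial.X := by simp [hφ1def]
  have hφ2X0 : φ2 (X 0) = Polynomial.C ω * Polynomial.X := by simp [hφ2def]
  have hφ2X1 : φ2 (X 1) = Polynomial.X := by simp [hφ2def]
  have hφ2X2 : φ2 (X 2) = 0 := by simp [hφ2def]
  have hφ3X0 : φ3 (X 0) = Polynomial.X := by simp [hφ3def]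
  have hφ3X1 : φ3 (X 1) = -Polynomial.X := by simp [hφ3def]
  have hφ3X2 : φ3 (X 2) = 0 := by simp [hφ3def]
  -- pᵢ ≤ ker φᵢ
  have hCα : (Polynomial.C α : Polynomial (AlgebraicClosure k)) ^ 2 + 3 = 0 := by
    rw [← Polynomial.C_pow, hα, map_neg, map_ofNat]; ring
  have hCω : (Polynomial.C ω : Polynomial (AlgebraicClosure k)) ^ 2 - Polynomial.C ω + 1 = 0 := by
    rw [← Polynomial.C_1, ← Polynomial.C_pow, ← Polynomial.C_sub, ← Polynomial.C_add, hω,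
      Polynomial.C_0]
  have hker1 : ∀ x ∈ p1, φ1 x = 0 := by
    have : p1 ≤ RingHom.ker φ1.toRingHom := by
      rw [hp1def, Ideal.span_le, Set.insert_subset_iff, Set.singleton_subset_iff]
      constructor
      · simp only [SetLike.mem_coe, RingHom.mem_ker, AlgHom.toRingHom_eq_coe,
          RingHom.coe_coe]
        exact hφ1X0
      · simp only [SetLike.mem_coe, RingHom.mem_ker, AlgHom.toRingHom_eq_coe,
          RingHom.coe_coe, map_add, map_mul, map_pow, map_ofNat, hφ1X1, hφ1X2]
        linear_combination (Polynomial.X : Polynomial (AlgebraicClosure k)) ^ 2 * hCα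
    exact fun x hx => this hx
  have hker2 : ∀ x ∈ p2, φ2 x = 0 := by
    have : p2 ≤ RingHom.ker φ2.toRingHom := by
      rw [hp2def, Ideal.span_le, Set.insert_subset_iff, Set.singleton_subset_iff]
      constructor
      · simp only [SetLike.mem_coe, RingHom.mem_ker, AlgHom.toRingHom_eq_coe,
          RingHom.coe_coe]
        exact hφ2X2
      · simp only [SetLike.mem_coe, RingHom.mem_ker, AlgHom.toRingHom_eq_coe,
          RingHom.coe_coe, map_add, map_sub, map_mul, map_pow, hφ2X0, hφ2X1]
        linear_combination (Polynomial.X : Polynomial (AlgebraicClosure k)) ^ 2 * hCω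
    exact fun x hx => this hx
  have hker3 : ∀ x ∈ p3, φ3 x = 0 := by
    have : p3 ≤ RingHom.ker φ3.toRingHom := by
      rw [hp3def, Ideal.span_le, Set.insert_subset_iff, Set.singleton_subset_iff]
      constructor
      · simp only [SetLike.mem_coe, RingHom.mem_ker, AlgHom.toRingHom_eq_coe,
          RingHom.coe_coe]
        exact hφ3X2
      · simp only [SetLike.mem_coe, RingHom.mem_ker, AlgHom.toRingHom_eq_coe,
          RingHom.coe_coe, map_add, hφ3X0, hφ3X1]
        ring
    exact fun x hx => this hx
  -- ker φᵢ ≤ pᵢ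
  have hker_le1 : ∀ P, φ1 P = 0 → P ∈ p1 := by
    intro P hP
    obtain ⟨a, b, hab⟩ := Y0aux.reduce 1 2 0 (-3 * Polynomial.X ^ 2) 0 p1
      (by decide) hg1a
      (by
        have hexpr : (X 1 : MvPolynomial (Fin 3) k) ^ 2
            - (Polynomial.aeval (X 2) (-3 * Polynomial.X ^ 2 : Polynomial k)
              + Polynomial.aeval (X 2) (0 : Polynomial k) * X 1)
            = X 1 ^ 2 + 3 * X 2 ^ 2 := by
          simp only [map_zero, zero_mul, add_zero, map_mul, map_neg, map_ofNat, map_pow,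
            Polynomial.aeval_X]
          ring
        rw [hexpr]; exact hg1b) P
    have h0 : φ1 (Polynomial.aeval (X 2) a * X 1 + Polynomial.aeval (X 2) b) = 0 := by
      have h := hker1 _ hab
      rw [map_sub, hP, zero_sub, neg_eq_zero] at h
      exact h
    rw [map_add, map_mul, Y0aux.aeval_comp φ1 2 hφ1X2, Y0aux.aeval_comp φ1 2 hφ1X2, hφ1X1] at h0
    have h0' : (a * Polynomial.X).map (algebraMap k (AlgebraicClosure k)) * Polynomial.C α
        + b.map (algebraMap k (AlgebraicClosure k)) = 0 := by
      rw [Polynomial.map_mul, Polynomial.map_X]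
      linear_combination h0
    obtain ⟨ha, hb⟩ := Y0aux.indep hαk h0'
    have ha' : a = 0 := (mul_eq_zero.mp ha).resolve_right Polynomial.X_ne_zero
    rw [ha', hb] at hab
    simpa using hab
  have hker_le2 : ∀ P, φ2 P = 0 → P ∈ p2 := by
    intro P hP
    obtain ⟨a, b, hab⟩ := Y0aux.reduce 0 1 2 (-Polynomial.X ^ 2) Polynomial.X p2
      (by decide) hg2a
      (by
        have hexpr : (X 0 : MvPolynomial (Fin 3) k) ^ 2
            - (Polynomial.aeval (X 1) (-Polynomial.X ^ 2 : Polynomial k)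
              + Polynomial.aeval (X 1) (Polynomial.X : Polynomial k) * X 0)
            = X 0 ^ 2 - X 0 * X 1 + X 1 ^ 2 := by
          simp only [map_neg, map_pow, Polynomial.aeval_X]
          ring
        rw [hexpr]; exact hg2b) P
    have h0 : φ2 (Polynomial.aeval (X 1) a * X 0 + Polynomial.aeval (X 1) b) = 0 := by
      have h := hker2 _ hab
      rw [map_sub, hP, zero_sub, neg_eq_zero] at h
      exact h
    rw [map_add, map_mul, Y0aux.aeval_comp φ2 1 hφ2X1, Y0aux.aeval_comp φ2 1 hφ2X1, hφ2X0] at h0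
    have h0' : (a * Polynomial.X).map (algebraMap k (AlgebraicClosure k)) * Polynomial.C ω
        + b.map (algebraMap k (AlgebraicClosure k)) = 0 := by
      rw [Polynomial.map_mul, Polynomial.map_X]
      linear_combination h0
    obtain ⟨ha, hb⟩ := Y0aux.indep hωk h0'
    have ha' : a = 0 := (mul_eq_zero.mp ha).resolve_right Polynomial.X_ne_zero
    rw [ha', hb] at hab
    simpa using hab
  have hker_le3 : ∀ P, φ3 P = 0 → P ∈ p3 := by
    intro P hP
    obtain ⟨a, b, hab⟩ := Y0aux.reduce 1 0 2 (Polynomial.X ^ 2) 0 p3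
      (by decide) hg3a
      (by
        have hexpr : (X 1 : MvPolynomial (Fin 3) k) ^ 2
            - (Polynomial.aeval (X 0) (Polynomial.X ^ 2 : Polynomial k)
              + Polynomial.aeval (X 0) (0 : Polynomial k) * X 1)
            = (X 1 - X 0) * (X 0 + X 1) := by
          simp only [map_zero, zero_mul, add_zero, map_pow, Polynomial.aeval_X]
          ring
        rw [hexpr]; exact p3.mul_mem_left _ hg3b) P
    have h0 : φ3 (Polynomial.aeval (X 0) a * X 1 + Polynomial.aeval (X 0) b) = 0 := by
      have h := hker3 _ hab
      rw [map_sub, hP, zero_sub, neg_eq_zero] at h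
      exact h
    rw [map_add, map_mul, Y0aux.aeval_comp φ3 0 hφ3X0, Y0aux.aeval_comp φ3 0 hφ3X0, hφ3X1] at h0
    simp only [Algebra.algebraMap_self, Polynomial.map_id] at h0
    have hb : b = a * Polynomial.X := by linear_combination h0
    have hmem := p3.add_mem hab (p3.mul_mem_left (Polynomial.aeval (X 0) a) hg3b)
    have heq : P - (Polynomial.aeval (X 0) a * X 1 + Polynomial.aeval (X 0) b)
        + Polynomial.aeval (X 0) a * (X 0 + X 1) = P := by
      rw [hb]
      simp only [map_mul, Polynomial.aeval_X]
      ring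
    rwa [heq] at hmem
  -- primality
  have hp1prime : p1.IsPrime := by
    have heq : p1 = RingHom.ker φ1.toRingHom := by
      apply le_antisymm
      · intro x hx
        exact hker1 x hx
      · intro x hx
        exact hker_le1 x hx
    rw [heq]
    exact RingHom.ker_isPrime _
  have hp2prime : p2.IsPrime := by
    have heq : p2 = RingHom.ker φ2.toRingHom := by
      apply le_antisymm
      · intro x hx
        exact hker2 x hx
      · intro x hx
        exact hker_le2 x hx
    rw [heq]
    exact RingHom.ker_isPrime _
  have hp3prime : p3.IsPrime := by
    have heq : p3 = RingHom.ker φ3.toRingHom := by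
      apply le_antisymm
      · intro x hx
        exact hker3 x hx
      · intro x hx
        exact hker_le3 x hx
    rw [heq]
    exact RingHom.ker_isPrime _
  -- non-memberships
  have hωne0 : ω ≠ 0 := by
    intro h
    rw [h] at hω
    norm_num at hω
  have hωnem1 : ω ≠ -1 := by
    intro h
    rw [h] at hω
    norm_num at hω
  have hX2not1 : (X 2 : MvPolynomial (Fin 3) k) ∉ p1 := by
    intro h
    have := hker1 _ h
    rw [hφ1X2] at this
    exact Polynomial.X_ne_zero this
  have hX0not2 : (X 0 : MvPolynomial (Fin 3) k) ∉ p2 := by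
    intro h
    have := hker2 _ h
    rw [hφ2X0] at this
    rcases mul_eq_zero.mp this with h' | h'
    · exact hωne0 (by simpa using h')
    · exact Polynomial.X_ne_zero h'
  have hX0not3 : (X 0 : MvPolynomial (Fin 3) k) ∉ p3 := by
    intro h
    have := hker3 _ h
    rw [hφ3X0] at this
    exact Polynomial.X_ne_zero this
  have hsumnot2 : (X 0 + X 1 : MvPolynomial (Fin 3) k) ∉ p2 := by
    intro h
    have h' := hker2 _ h
    rw [map_add, hφ2X0, hφ2X1] at h'
    have h'' : (Polynomial.C ω + 1) * Polynomial.X = (0 : Polynomial (AlgebraicClosure k)) := by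
      linear_combination h'
    rcases mul_eq_zero.mp h'' with h3 | h3
    · apply hωnem1
      have : Polynomial.C ω = Polynomial.C (-1 : AlgebraicClosure k) := by
        rw [map_neg, map_one]
        linear_combination h3
      exact Polynomial.C_injective this
    · exact Polynomial.X_ne_zero h3
  have hquadnot3 : (X 0 ^ 2 - X 0 * X 1 + X 1 ^ 2 : MvPolynomial (Fin 3) k) ∉ p3 := by
    intro h
    have h' := hker3 _ h
    rw [map_add, map_sub, map_mul, map_pow, map_pow, hφ3X0, hφ3X1] at h'
    have h'' : (3 : Polynomial k) * Polynomial.X ^ 2 = 0 := by linear_combination h'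
    rcases mul_eq_zero.mp h'' with h3 | h3
    · norm_num at h3
    · exact pow_ne_zero _ Polynomial.X_ne_zero h3
  -- covering lemma
  have hcover : ∀ q : Ideal (MvPolynomial (Fin 3) k), q.IsPrime → I ≤ q →
      p1 ≤ q ∨ p2 ≤ q ∨ p3 ≤ q := by
    intro q hq hIq
    rw [hIdef] at hIq
    have hA : A₀ k ∈ q := hIq (Ideal.subset_span (Set.mem_insert _ _))
    have hB : B₀ k ∈ q := hIq (Ideal.subset_span (Set.mem_insert_of_mem _ rfl))
    have h4 : (4 : MvPolynomial (Fin 3) k) * (X 2 * (X 1 ^ 2 + 3 * X 2 ^ 2)) ∈ q := by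
      have h := q.sub_mem hA hB
      have heq : A₀ k - B₀ k = 4 * (X 2 * (X 1 ^ 2 + 3 * X 2 ^ 2)) := by
        simp only [A₀, B₀]; ring
      rwa [heq] at h
    have h4' : (X 2 : MvPolynomial (Fin 3) k) * (X 1 ^ 2 + 3 * X 2 ^ 2) ∈ q := by
      rcases hq.mem_or_mem h4 with h | h
      · exfalso
        apply hq.ne_top
        apply q.eq_top_of_isUnit_mem h
        have h1 : (C (4⁻¹ : k) : MvPolynomial (Fin 3) k) * 4 = 1 := by
          rw [← map_ofNat (C : k →+* MvPolynomial (Fin 3) k) 4, ← map_mul]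
          norm_num
        exact IsUnit.of_mul_eq_one _ ((mul_comm _ _).trans h1)
      · exact h
    rcases hq.mem_or_mem h4' with h2 | h13
    · have hsum : (X 0 : MvPolynomial (Fin 3) k) ^ 3 + X 1 ^ 3 ∈ q := by
        have h := q.sub_mem hA (q.mul_mem_left (3 * X 1 ^ 2 + 3 * X 1 * X 2 + 9 * X 2 ^ 2) h2)
        have heq : A₀ k - (3 * X 1 ^ 2 + 3 * X 1 * X 2 + 9 * X 2 ^ 2) * X 2
            = X 0 ^ 3 + X 1 ^ 3 := by
          simp only [A₀]; ring
        rwa [heq] at h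
      have hprod : ((X 0 : MvPolynomial (Fin 3) k) + X 1)
          * (X 0 ^ 2 - X 0 * X 1 + X 1 ^ 2) ∈ q := by
        have heq : ((X 0 : MvPolynomial (Fin 3) k) + X 1) * (X 0 ^ 2 - X 0 * X 1 + X 1 ^ 2)
            = X 0 ^ 3 + X 1 ^ 3 := by ring
        rw [heq]; exact hsum
      rcases hq.mem_or_mem hprod with h | h
      · right; right
        rw [hp3def, Ideal.span_le, Set.insert_subset_iff, Set.singleton_subset_iff]
        exact ⟨h2, h⟩
      · right; left
        rw [hp2def, Ideal.span_le, Set.insert_subset_iff, Set.singleton_subset_iff]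
        exact ⟨h2, h⟩
    · left
      have hx0 : (X 0 : MvPolynomial (Fin 3) k) ∈ q := by
        apply hq.mem_of_pow_mem 3
        have h := q.sub_mem hA (q.mul_mem_left (X 1 + 3 * X 2) h13)
        have heq : A₀ k - (X 1 + 3 * X 2) * (X 1 ^ 2 + 3 * X 2 ^ 2) = X 0 ^ 3 := by
          simp only [A₀]; ring
        rwa [heq] at h
      rw [hp1def, Ideal.span_le, Set.insert_subset_iff, Set.singleton_subset_iff]
      exact ⟨hx0, h13⟩
  -- non-inclusions
  have hn21 : ¬p2 ≤ p1 := fun h => hX2not1 (h hg2a)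
  have hn31 : ¬p3 ≤ p1 := fun h => hX2not1 (h hg3a)
  have hn12 : ¬p1 ≤ p2 := fun h => hX0not2 (h hg1a)
  have hn32 : ¬p3 ≤ p2 := fun h => hsumnot2 (h hg3b)
  have hn13 : ¬p1 ≤ p3 := fun h => hX0not3 (h hg1a)
  have hn23 : ¬p2 ≤ p3 := fun h => hquadnot3 (h hg2b)
  -- assemble
  ext q
  simp only [Ideal.minimalPrimes, Minimal, Set.mem_setOf_eq, Set.mem_insert_iff,
    Set.mem_singleton_iff]
  constructor
  · rintro ⟨⟨hqp, hIq⟩, hmin⟩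
    rcases hcover q hqp hIq with h | h | h
    · exact Or.inl (le_antisymm (hmin ⟨hp1prime, hIle1⟩ h) h)
    · exact Or.inr (Or.inl (le_antisymm (hmin ⟨hp2prime, hIle2⟩ h) h))
    · exact Or.inr (Or.inr (le_antisymm (hmin ⟨hp3prime, hIle3⟩ h) h))
  · rintro (rfl | rfl | rfl)
    · refine ⟨⟨hp1prime, hIle1⟩, ?_⟩
      intro y hy hle
      rcases hcover y hy.1 hy.2 with h | h | h
      · exact h
      · exact absurd (h.trans hle) hn21
      · exact absurd (h.trans hle) hn31
    · refine ⟨⟨hp2prime, hIle2⟩, ?_⟩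
      intro y hy hle
      rcases hcover y hy.1 hy.2 with h | h | h
      · exact absurd (h.trans hle) hn12
      · exact h
      · exact absurd (h.trans hle) hn32
    · refine ⟨⟨hp3prime, hIle3⟩, ?_⟩
      intro y hy hle
      rcases hcover y hy.1 hy.2 with h | h | h
      · exact absurd (h.trans hle) hn13
      · exact absurd (h.trans hle) hn23
      · exact h
end
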